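/- Let M be an n×n real matrix with SVD M = UΣVᵀ, and let Δ₁, Δ₂ ∈ ℝ^{n×c}. Let P be a matrix whose columns form an orthonormal basis for the column space of (I − UUᵀ)Δ₁, and Q an orthonormal basis matrix for the column space of (I − VVᵀ)Δ₂. Set R₁ = Pᵀ(I − UUᵀ)Δ₁ and R₂ = Qᵀ(I − VVᵀ)Δ₂. Then M + Δ₁Δ₂ᵀ = [U P] H [V Q]ᵀ, where H = [[Σ, 0],[0, 0]] + [Uᵀ Δ₁; R₁][Vᵀ Δ₂; R₂]ᵀ. -/

import Mathlib

open Matrix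

/-- Core identity of the TISVD incremental SVD update:
`M + Δ₁ Δ₂ᵀ = [U P] H [V Q]ᵀ` where
`H = [[Σ, 0],[0, 0]] + [Uᵀ Δ₁; R₁] [Vᵀ Δ₂; R₂]ᵀ`. -/
theorem tisvd_core_identity {n k c p q : ℕ}
    (M : Matrix (Fin n) (Fin n) ℝ)
    (U : Matrix (Fin n) (Fin k) ℝ) (V : Matrix (Fin n) (Fin k) ℝ)
    (S : Matrix (Fin k) (Fin k) ℝ) (σ : Fin k → ℝ)
    (Δ₁ Δ₂ : Matrix (Fin n) (Fin c) ℝ)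
    (P : Matrix (Fin n) (Fin p) ℝ) (Q : Matrix (Fin n) (Fin q) ℝ)
    -- SVD of M
    (hS : S = Matrix.diagonal σ)
    (hM : M = U * S * Vᵀ)
    (hU : Uᵀ * U = 1) (hV : Vᵀ * V = 1)
    -- P is an orthonormal basis for the column space of (I - U Uᵀ) Δ₁
    (hP : Pᵀ * P = 1) (hUP : Uᵀ * P = 0)
    (hPspan : P * (Pᵀ * ((1 - U * Uᵀ) * Δ₁)) = (1 - U * Uᵀ) * Δ₁)
    -- Q is an orthonormal basis for the column space of (I - V Vᵀ) Δ₂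
    (hQ : Qᵀ * Q = 1) (hVQ : Vᵀ * Q = 0)
    (hQspan : Q * (Qᵀ * ((1 - V * Vᵀ) * Δ₂)) = (1 - V * Vᵀ) * Δ₂)
    -- definitions of R₁, R₂ and H
    (R₁ : Matrix (Fin p) (Fin c) ℝ) (R₂ : Matrix (Fin q) (Fin c) ℝ)
    (hR₁ : R₁ = Pᵀ * ((1 - U * Uᵀ) * Δ₁))
    (hR₂ : R₂ = Qᵀ * ((1 - V * Vᵀ) * Δ₂))
    (H : Matrix (Fin k ⊕ Fin p) (Fin k ⊕ Fin q) ℝ)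
    (hH : H = fromBlocks S 0 0 0 + fromRows (Uᵀ * Δ₁) R₁ * (fromRows (Vᵀ * Δ₂) R₂)ᵀ) :
    M + Δ₁ * Δ₂ᵀ = fromCols U P * H * (fromCols V Q)ᵀ := by
  have h1 : fromCols U P * fromRows (Uᵀ * Δ₁) R₁ = Δ₁ := by
    rw [fromCols_mul_fromRows, hR₁, ← Matrix.mul_assoc, hPspan, Matrix.sub_mul,
      Matrix.one_mul]
    abel
  have h2 : fromCols V Q * fromRows (Vᵀ * Δ₂) R₂ = Δ₂ := by
    rw [fromCols_mul_fromRows, hR₂, ← Matrix.mul_assoc, hQspan, Matrix.sub_mul,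
      Matrix.one_mul]
    abel
  have key : fromCols U P * (fromRows (Uᵀ * Δ₁) R₁ * (fromRows (Vᵀ * Δ₂) R₂)ᵀ) *
      (fromCols V Q)ᵀ = Δ₁ * Δ₂ᵀ := by
    rw [← Matrix.mul_assoc, h1, Matrix.mul_assoc, ← Matrix.transpose_mul, h2]
  have base : fromCols U P * (fromBlocks S 0 0 0 : Matrix (Fin k ⊕ Fin p) (Fin k ⊕ Fin q) ℝ) * (fromCols V Q)ᵀ = U * S * Vᵀ := by
    rw [transpose_fromCols, fromCols_mul_fromBlocks]
    simp [fromCols_mul_fromRows]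
  rw [hH, hM, Matrix.mul_add, Matrix.add_mul, key, base]
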